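/- Fix α > 0 and let g(u,v) = d_R(u,v)^{−α}. There are constants c_1, c_2 > 0 (depending only on α) such that, with probability 1 − o(1) as n = 2^k − 1 → ∞, the random ringed tree satisfies c_1·log n ≤ δ(RRT(k, g)) ≤ c_2·log n. -/

import Mathlib

/-- The Gromov four-point quantity `δ(u,v,w,x)`: with the three pairings of the
four vertices sorted, half the difference between the largest and the second
largest pair-sum of graph distances. -/
noncomputable def deltaFour {V : Type*} (G : SimpleGraph V) (u v w x : V) : ℝ :=
  let a : ℝ := (G.dist u v : ℝ) + (G.dist w x : ℝ)
  let b : ℝ := (G.dist u x : ℝ) + (G.dist v w : ℝ)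
  let c : ℝ := (G.dist u w : ℝ) + (G.dist v x : ℝ)
  (2 * max a (max b c) + min a (min b c) - (a + b + c)) / 2

/-- The hyperbolicity `δ(G)` of a graph: the supremum of `δ(u,v,w,x)` over all
quadruples of vertices. -/
noncomputable def hyperbolicity {V : Type*} (G : SimpleGraph V) : ℝ :=
  ⨆ u, ⨆ v, ⨆ w, ⨆ x, deltaFour G u v w x

/-- Vertex set of the ringed tree with `k` levels: level `i` (for `i < k`) consists of the
integers `{0, …, 2^i - 1}`. -/
abbrev RTV (k : ℕ) : Type := Σ i : Fin k, Fin (2 ^ (i : ℕ))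

/-- Tree adjacency: each vertex `σ` at level `i` is joined to its children `2σ` and `2σ+1`
at level `i+1`. -/
def treeAdj {k : ℕ} (u v : RTV k) : Prop :=
  ((u.1 : ℕ) + 1 = (v.1 : ℕ) ∧ ((v.2 : ℕ) = 2 * (u.2 : ℕ) ∨ (v.2 : ℕ) = 2 * (u.2 : ℕ) + 1)) ∨
  ((v.1 : ℕ) + 1 = (u.1 : ℕ) ∧ ((u.2 : ℕ) = 2 * (v.2 : ℕ) ∨ (u.2 : ℕ) = 2 * (v.2 : ℕ) + 1))

/-- Ring adjacency: at each level `i ≥ 1`, `m` is joined to `m + 1 (mod 2^i)`. -/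
def ringAdj {k : ℕ} (u v : RTV k) : Prop :=
  (u.1 : ℕ) = (v.1 : ℕ) ∧ 1 ≤ (u.1 : ℕ) ∧
    ((v.2 : ℕ) = ((u.2 : ℕ) + 1) % 2 ^ (u.1 : ℕ) ∨ (u.2 : ℕ) = ((v.2 : ℕ) + 1) % 2 ^ (v.1 : ℕ))

lemma ringAdj_no_loop {i m : ℕ} (hm : m < 2 ^ i) (hi : 1 ≤ i) : m ≠ (m + 1) % 2 ^ i := by
  have h2 : 2 ≤ 2 ^ i := by
    calc 2 = 2 ^ 1 := by norm_num
    _ ≤ 2 ^ i := Nat.pow_le_pow_right (by norm_num) hi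
  intro h
  rcases Nat.lt_or_ge (m + 1) (2 ^ i) with hlt | hge
  · rw [Nat.mod_eq_of_lt hlt] at h; omega
  · have he : m + 1 = 2 ^ i := by omega
    rw [he, Nat.mod_self] at h; omega

/-- The ringed tree `RT(k)`: the fully binary tree with `k` levels, with the vertices of each
level `i ≥ 1` additionally connected into a ring. -/
def ringedTree (k : ℕ) : SimpleGraph (RTV k) where
  Adj u v := treeAdj u v ∨ ringAdj u v
  symm := ⟨by
    rintro u v (h | ⟨h1, h2, h3⟩)
    · exact Or.inl (Or.symm h)
    · exact Or.inr ⟨h1.symm, h1 ▸ h2, Or.symm h3⟩⟩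
  loopless := ⟨by
    rintro u ((⟨h1, _⟩ | ⟨h1, _⟩) | ⟨_, h2, (h3 | h3)⟩)
    · omega
    · omega
    · exact ringAdj_no_loop u.2.isLt h2 h3
    · exact ringAdj_no_loop u.2.isLt h2 h3⟩

/-- Cyclic distance on a ring with `N` vertices: `min(|a-b|, N - |a-b|)`. -/
def cycDist (N a b : ℕ) : ℕ := min (Nat.dist a b) (N - Nat.dist a b)

/-- Ring distance `d_R(u,v)` of two vertices of a ringed tree on the same level. -/
def rtRingDist {k : ℕ} (u v : RTV k) : ℕ := cycDist (2 ^ (u.1 : ℕ)) (u.2 : ℕ) (v.2 : ℕ)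

/-- The parent of a vertex `m` at level `i ≥ 1` is `⌊m/2⌋` at level `i - 1`. -/
def rtParent {k : ℕ} (u : RTV k) (h : 1 ≤ (u.1 : ℕ)) : RTV k :=
  ⟨⟨(u.1 : ℕ) - 1, Nat.lt_of_le_of_lt (Nat.sub_le _ 1) u.1.isLt⟩,
   ⟨(u.2 : ℕ) / 2, by
      have h1 : (u.2 : ℕ) < 2 ^ (u.1 : ℕ) := u.2.isLt
      have h2 : 2 ^ ((u.1 : ℕ) - 1) * 2 = 2 ^ (u.1 : ℕ) := by
        rw [← pow_succ]; congr 1; omega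
      show (u.2 : ℕ) / 2 < 2 ^ ((u.1 : ℕ) - 1)
      exact Nat.div_lt_of_lt_mul (by omega)⟩⟩

open MeasureTheory
open scoped ENNReal

/-- The leaf of `RT(k+1)` numbered `m` (level `k`, the outermost level). -/
def leafE (k : ℕ) (m : Fin (2 ^ k)) : RTV (k + 1) := ⟨⟨k, Nat.lt_succ_self k⟩, m⟩

/-- The random ringed tree graph determined by the long-range choices `τ` of the leaves:
the ringed tree `RT(k+1)` together with, for each leaf `m`, the long-range edge
`(m, τ m)` on the outermost level. -/
def rrtGraph (k : ℕ) (τ : Fin (2 ^ k) → Fin (2 ^ k)) : SimpleGraph (RTV (k + 1)) where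
  Adj u v := (ringedTree (k + 1)).Adj u v ∨
    (u ≠ v ∧ ∃ m : Fin (2 ^ k),
      (u = leafE k m ∧ v = leafE k (τ m)) ∨ (v = leafE k m ∧ u = leafE k (τ m)))
  symm := ⟨by
    rintro u v (h | ⟨hne, m, hm⟩)
    · exact Or.inl ((ringedTree (k + 1)).adj_symm h)
    · exact Or.inr ⟨hne.symm, m, Or.symm hm⟩⟩
  loopless := ⟨by
    rintro u (h | ⟨hne, _⟩)
    · exact (ringedTree (k + 1)).irrefl h
    · exact hne rfl⟩

/-- Unnormalized weight with which leaf `v` chooses leaf `u` as its long-range contact: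
`g u v`, and `0` for `u = v`. -/
noncomputable def leafWeight (k : ℕ) (g : Fin (2 ^ k) → Fin (2 ^ k) → ℝ)
    (v u : Fin (2 ^ k)) : ℝ≥0∞ :=
  if u = v then 0 else ENNReal.ofReal (g u v)

/-- The law of the long-range choices of the leaves in the random (ringed) tree model:
independently for each leaf `v`, a leaf `u ≠ v` is chosen with probability
`g(u,v) / Σ_{u' ≠ v} g(u',v)`. -/
noncomputable def leafChoiceMeasure (k : ℕ) (g : Fin (2 ^ k) → Fin (2 ^ k) → ℝ) :
    Measure (Fin (2 ^ k) → Fin (2 ^ k)) :=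
  Measure.pi fun v =>
    (∑ u : Fin (2 ^ k), leafWeight k g v u)⁻¹ •
      ∑ u : Fin (2 ^ k), leafWeight k g v u • Measure.dirac u

/-- The height `h(a,b)` of the lowest common ancestor of the leaves numbered `a` and `b`:
the least `t` with `⌊a/2^t⌋ = ⌊b/2^t⌋`, i.e. the number of levels between the leaves and
their lowest common ancestor. -/
def lcaHeight (a b : ℕ) : ℕ :=
  Nat.find (p := fun t => a / 2 ^ t = b / 2 ^ t)
    ⟨a + b, by
      have ha : a < 2 ^ (a + b) := lt_of_le_of_lt (Nat.le_add_right a b) Nat.lt_two_pow_self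
      have hb : b < 2 ^ (a + b) := lt_of_le_of_lt (Nat.le_add_left b a) Nat.lt_two_pow_self
      simp [Nat.div_eq_of_lt ha, Nat.div_eq_of_lt hb]⟩

namespace RRTaux

/-! ### cyclic distance lemmas -/

lemma natdist_def (a b : ℕ) : Nat.dist a b = a - b + (b - a) := rfl

lemma cyc_self (N a : ℕ) : cycDist N a a = 0 := by
  simp [cycDist, natdist_def]

lemma cyc_comm (N a b : ℕ) : cycDist N a b = cycDist N b a := by
  simp only [cycDist, natdist_def]; omega

lemma cyc_le_natdist (N a b : ℕ) : cycDist N a b ≤ Nat.dist a b := min_le_left _ _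

lemma cyc_triangle {N : ℕ} (a c : ℕ) (b : ℕ) (ha : a < N) (hb : b < N) (hc : c < N) :
    cycDist N a c ≤ cycDist N a b + cycDist N b c := by
  simp only [cycDist, natdist_def]; omega

lemma cyc_eq_zero {N a b : ℕ} (ha : a < N) (hb : b < N) (h : cycDist N a b = 0) : a = b := by
  simp only [cycDist, natdist_def] at h; omega

lemma cyc_scale (c N a b : ℕ) :
    cycDist (c * N) (c * a) (c * b) = c * cycDist N a b := by
  have h1 : Nat.dist (c * a) (c * b) = c * Nat.dist a b := by
    simp only [natdist_def]; rw [Nat.mul_add, Nat.mul_sub, Nat.mul_sub]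
  simp only [cycDist, h1, ← Nat.mul_sub]
  rcases le_total (Nat.dist a b) (N - Nat.dist a b) with h | h
  · rw [min_eq_left h, min_eq_left (Nat.mul_le_mul_left c h)]
  · rw [min_eq_right h, min_eq_right (Nat.mul_le_mul_left c h)]

/-- distance going `d` steps around: `cycDist N a ((a+d) % N) = d` for `2d ≤ N`. -/
lemma cyc_offset {N a d : ℕ} (ha : a < N) (hd : 2 * d ≤ N) :
    cycDist N a ((a + d) % N) = d := by
  rcases Nat.lt_or_ge (a + d) N with h | h
  · rw [Nat.mod_eq_of_lt h]
    simp only [cycDist, natdist_def]; omega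
  · have h2 : (a + d) % N = a + d - N := by
      rw [Nat.mod_eq_sub_mod (by omega), Nat.mod_eq_of_lt (by omega)]
    rw [h2]; simp only [cycDist, natdist_def]; omega

/-! ### basic vertex lemmas -/

variable {k : ℕ} {τ : Fin (2 ^ k) → Fin (2 ^ k)}

lemma rtv_ext {K : ℕ} {u v : RTV K} (h1 : (u.1 : ℕ) = (v.1 : ℕ))
    (h2 : (u.2 : ℕ) = (v.2 : ℕ)) : u = v := by
  obtain ⟨⟨i, hi⟩, ⟨m, hm⟩⟩ := u
  obtain ⟨⟨j, hj⟩, ⟨n, hn⟩⟩ := v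
  simp only at h1 h2
  subst h1; subst h2; rfl

/-- The root vertex. -/
def rootV (k : ℕ) : RTV (k + 1) := ⟨⟨0, Nat.succ_pos k⟩, ⟨0, Nat.one_le_two_pow⟩⟩

/-- The `t`-fold ancestor of a vertex. -/
def ancV (u : RTV (k + 1)) (t : ℕ) : RTV (k + 1) :=
  ⟨⟨(u.1 : ℕ) - t, lt_of_le_of_lt (Nat.sub_le _ _) u.1.isLt⟩,
   ⟨(u.2 : ℕ) / 2 ^ t, by
      have h1 : (u.2 : ℕ) < 2 ^ t * 2 ^ ((u.1 : ℕ) - t) := by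
        calc (u.2 : ℕ) < 2 ^ (u.1 : ℕ) := u.2.isLt
        _ ≤ 2 ^ (t + ((u.1 : ℕ) - t)) := Nat.pow_le_pow_right (by norm_num) (by omega)
        _ = 2 ^ t * 2 ^ ((u.1 : ℕ) - t) := by rw [pow_add]
      show (u.2 : ℕ) / 2 ^ t < 2 ^ ((u.1 : ℕ) - t)
      exact Nat.div_lt_of_lt_mul h1⟩⟩

@[simp] lemma ancV_lvl (u : RTV (k + 1)) (t : ℕ) : ((ancV u t).1 : ℕ) = (u.1 : ℕ) - t := rfl
@[simp] lemma ancV_val (u : RTV (k + 1)) (t : ℕ) : ((ancV u t).2 : ℕ) = (u.2 : ℕ) / 2 ^ t := rfl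

lemma ancV_zero (u : RTV (k + 1)) : ancV u 0 = u :=
  rtv_ext (by simp) (by simp)

lemma ancV_root (u : RTV (k + 1)) : ancV u (u.1 : ℕ) = rootV k :=
  rtv_ext (by simp [rootV]) (by simp [rootV, Nat.div_eq_of_lt u.2.isLt])

lemma anc_adj (u : RTV (k + 1)) {t : ℕ} (ht : t + 1 ≤ (u.1 : ℕ)) :
    (rrtGraph k τ).Adj (ancV u t) (ancV u (t + 1)) := by
  left; left; right
  constructor
  · simp; omega
  · have he : (u.2 : ℕ) / 2 ^ (t + 1) = (u.2 : ℕ) / 2 ^ t / 2 := by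
      rw [Nat.div_div_eq_div_mul, ← pow_succ]
    simp only [ancV_val, he]
    omega

lemma reach_anc (u : RTV (k + 1)) (t : ℕ) (ht : t ≤ (u.1 : ℕ)) :
    (rrtGraph k τ).Reachable u (ancV u t) := by
  induction t with
  | zero => rw [ancV_zero]
  | succ t ih =>
    exact (ih (by omega)).trans (anc_adj u ht).reachable

lemma reach_root (u : RTV (k + 1)) : (rrtGraph k τ).Reachable u (rootV k) := by
  rw [← ancV_root u]; exact reach_anc u _ le_rfl

lemma rrt_connected : (rrtGraph k τ).Connected := by
  have : Nonempty (RTV (k + 1)) := ⟨rootV k⟩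
  exact ⟨fun u v => (reach_root u).trans (reach_root v).symm⟩

/-! ### level bounds along walks -/

lemma adj_lvl {u v : RTV (k + 1)} (h : (rrtGraph k τ).Adj u v) :
    (u.1 : ℕ) ≤ (v.1 : ℕ) + 1 ∧ (v.1 : ℕ) ≤ (u.1 : ℕ) + 1 := by
  rcases h with ((h | h) | h) | ⟨hne, m, (⟨h1, h2⟩ | ⟨h1, h2⟩)⟩
  · omega
  · omega
  · obtain ⟨h1, -⟩ := h; omega
  all_goals subst h1; subst h2; simp [leafE]

lemma walk_lvl {u v : RTV (k + 1)} (p : (rrtGraph k τ).Walk u v) :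
    (u.1 : ℕ) ≤ (v.1 : ℕ) + p.length ∧ (v.1 : ℕ) ≤ (u.1 : ℕ) + p.length := by
  induction p with
  | nil => simp
  | cons h q ih =>
    have h2 := adj_lvl h
    rw [SimpleGraph.Walk.length_cons]
    omega

lemma lvl_sub_le_dist (u v : RTV (k + 1)) :
    (u.1 : ℕ) - (v.1 : ℕ) ≤ (rrtGraph k τ).dist u v ∧
    (v.1 : ℕ) - (u.1 : ℕ) ≤ (rrtGraph k τ).dist u v := by
  obtain ⟨p, hp⟩ := ((rrt_connected (τ := τ)) u v).exists_walk_length_eq_dist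
  have := walk_lvl p
  omega

lemma walk_through (u v : RTV (k + 1)) (p : (rrtGraph k τ).Walk u v) {z : RTV (k + 1)}
    (hz : z ∈ p.support) :
    ((u.1 : ℕ) - (z.1 : ℕ)) + ((v.1 : ℕ) - (z.1 : ℕ)) ≤ p.length ∧
    ((z.1 : ℕ) - (u.1 : ℕ)) + ((z.1 : ℕ) - (v.1 : ℕ)) ≤ p.length := by
  have hsplit : (p.takeUntil z hz).length + (p.dropUntil z hz).length = p.length := by
    rw [← SimpleGraph.Walk.length_append, p.take_spec hz]
  have h1 := walk_lvl (p.takeUntil z hz)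
  have h2 := walk_lvl (p.dropUntil z hz)
  omega

/-! ### distance upper bounds -/

lemma dist_le_one_of_adj {u v : RTV (k + 1)} (h : (rrtGraph k τ).Adj u v) :
    (rrtGraph k τ).dist u v ≤ 1 := by
  have := SimpleGraph.dist_le (SimpleGraph.Walk.cons h SimpleGraph.Walk.nil)
  simpa using this

lemma dist_anc (u : RTV (k + 1)) (t : ℕ) (ht : t ≤ (u.1 : ℕ)) :
    (rrtGraph k τ).dist u (ancV u t) ≤ t := by
  induction t with
  | zero => rw [ancV_zero]; simp
  | succ t ih =>
    calc (rrtGraph k τ).dist u (ancV u (t + 1))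
        ≤ (rrtGraph k τ).dist u (ancV u t) + (rrtGraph k τ).dist (ancV u t) (ancV u (t + 1)) :=
          (rrt_connected (τ := τ)).dist_triangle
      _ ≤ t + 1 := by
          have := dist_le_one_of_adj (anc_adj u (τ := τ) ht)
          have h2 := ih (by omega)
          omega

lemma dist_root (u : RTV (k + 1)) : (rrtGraph k τ).dist u (rootV k) ≤ (u.1 : ℕ) := by
  have := dist_anc (τ := τ) u (u.1 : ℕ) le_rfl
  rwa [ancV_root u] at this

lemma dist_root_eq (u : RTV (k + 1)) : (rrtGraph k τ).dist u (rootV k) = (u.1 : ℕ) := by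
  have h1 := dist_root (τ := τ) u
  have h2 := lvl_sub_le_dist (τ := τ) u (rootV k)
  have h3 : ((rootV k).1 : ℕ) = 0 := rfl
  omega

end RRTaux

namespace RRTaux

variable {k : ℕ} {τ : Fin (2 ^ k) → Fin (2 ^ k)}

/-- scaled angular position of a vertex, on the ring of size `2^(k-1)`. -/
def psiV (k : ℕ) (u : RTV (k + 1)) : ℕ := (u.2 : ℕ) * 2 ^ (k - 1 - (u.1 : ℕ))

lemma psi_lt {u : RTV (k + 1)} (hu : (u.1 : ℕ) ≤ k - 1) : psiV k u < 2 ^ (k - 1) := by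
  calc psiV k u < 2 ^ (u.1 : ℕ) * 2 ^ (k - 1 - (u.1 : ℕ)) :=
        mul_lt_mul_of_pos_right u.2.isLt (by positivity)
  _ = 2 ^ (k - 1) := by rw [← pow_add]; congr 1; omega

lemma natdist_mul_add (a b c : ℕ) : Nat.dist (a * c) ((a + b) * c) = b * c := by
  rw [add_mul, Nat.dist_eq_sub_of_le (Nat.le_add_right _ _), Nat.add_sub_cancel_left]

lemma edge_angle (hk : 1 ≤ k) (l0 : ℕ) {u v : RTV (k + 1)}
    (h : (ringedTree (k + 1)).Adj u v)
    (hu1 : (u.1 : ℕ) ≤ k - 1) (hv1 : (v.1 : ℕ) ≤ k - 1)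
    (hu0 : l0 ≤ (u.1 : ℕ)) (hv0 : l0 ≤ (v.1 : ℕ)) :
    cycDist (2 ^ (k - 1)) (psiV k u) (psiV k v) ≤ 2 ^ (k - 1 - l0) := by
  have key : ∀ u v : RTV (k + 1), (u.1 : ℕ) ≤ k - 1 → (v.1 : ℕ) ≤ k - 1 → l0 ≤ (u.1 : ℕ) →
      ((u.1 : ℕ) + 1 = (v.1 : ℕ) ∧
        ((v.2 : ℕ) = 2 * (u.2 : ℕ) ∨ (v.2 : ℕ) = 2 * (u.2 : ℕ) + 1)) →
      cycDist (2 ^ (k - 1)) (psiV k u) (psiV k v) ≤ 2 ^ (k - 1 - l0) := by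
    intro u v hu1 hv1 hu0 ⟨h1, h2⟩
    have e1 : k - 1 - (u.1 : ℕ) = (k - 1 - (v.1 : ℕ)) + 1 := by omega
    have e2 : psiV k u = 2 * (u.2 : ℕ) * 2 ^ (k - 1 - (v.1 : ℕ)) := by
      rw [psiV, e1, pow_succ]; ring
    have e3 : 2 ^ (k - 1 - (v.1 : ℕ)) ≤ 2 ^ (k - 1 - l0) :=
      Nat.pow_le_pow_right (by norm_num) (by omega)
    refine le_trans (cyc_le_natdist _ _ _) ?_
    rcases h2 with h2 | h2
    · have e4 : psiV k v = (2 * (u.2 : ℕ) + 0) * 2 ^ (k - 1 - (v.1 : ℕ)) := by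
        rw [psiV, h2]; ring
      rw [e2, e4, natdist_mul_add, zero_mul]
      exact Nat.zero_le _
    · have e4 : psiV k v = (2 * (u.2 : ℕ) + 1) * 2 ^ (k - 1 - (v.1 : ℕ)) := by
        rw [psiV, h2]
      rw [e2, e4, natdist_mul_add, one_mul]
      exact e3
  rcases h with (h | h) | ⟨h1, h2, h3⟩
  · exact key u v hu1 hv1 hu0 h
  · rw [cyc_comm]; exact key v u hv1 hu1 hv0 h
  · -- ring edge
    have key2 : ∀ u v : RTV (k + 1), (u.1 : ℕ) = (v.1 : ℕ) → (u.1 : ℕ) ≤ k - 1 →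
        l0 ≤ (u.1 : ℕ) → (v.2 : ℕ) = ((u.2 : ℕ) + 1) % 2 ^ (u.1 : ℕ) →
        cycDist (2 ^ (k - 1)) (psiV k u) (psiV k v) ≤ 2 ^ (k - 1 - l0) := by
      intro u v h1 hu1 hu0 h3
      have e3 : 2 ^ (k - 1 - (u.1 : ℕ)) ≤ 2 ^ (k - 1 - l0) :=
        Nat.pow_le_pow_right (by norm_num) (by omega)
      have hvlt := u.2.isLt
      rcases Nat.lt_or_ge ((u.2 : ℕ) + 1) (2 ^ (u.1 : ℕ)) with hlt | hge
      · rw [Nat.mod_eq_of_lt hlt] at h3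
        refine le_trans (cyc_le_natdist _ _ _) ?_
        have e4 : psiV k v = ((u.2 : ℕ) + 1) * 2 ^ (k - 1 - (u.1 : ℕ)) := by
          rw [psiV, h3, ← h1]
        rw [psiV, e4, natdist_mul_add]
        rwa [one_mul]
      · have hu2 : (u.2 : ℕ) + 1 = 2 ^ (u.1 : ℕ) := by omega
        have hv2 : psiV k v = 0 := by
          rw [psiV, h3, hu2, Nat.mod_self, zero_mul]
        have h5 : psiV k u + 2 ^ (k - 1 - (u.1 : ℕ)) = 2 ^ (k - 1) := by
          rw [psiV, ← Nat.succ_mul, Nat.succ_eq_add_one, hu2, ← pow_add]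
          congr 1; omega
        rw [hv2, cycDist, Nat.dist_zero_right]
        refine le_trans (min_le_right _ _) ?_
        rw [← h5, Nat.add_sub_cancel_left]
        exact e3
    rcases h3 with h3 | h3
    · exact key2 u v h1 hu1 hu0 h3
    · rw [cyc_comm]; exact key2 v u h1.symm (by omega) (by omega) h3

lemma rrt_adj_below (hk : 1 ≤ k) {u v : RTV (k + 1)} (h : (rrtGraph k τ).Adj u v)
    (hu1 : (u.1 : ℕ) ≤ k - 1) : (ringedTree (k + 1)).Adj u v := by
  rcases h with h | ⟨hne, m, (⟨h1, h2⟩ | ⟨h1, h2⟩)⟩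
  · exact h
  · exfalso; rw [h1] at hu1; simp [leafE] at hu1; omega
  · exfalso; rw [h2] at hu1; simp [leafE] at hu1; omega

lemma walk_angle (hk : 1 ≤ k) (l0 : ℕ) {u v : RTV (k + 1)} (p : (rrtGraph k τ).Walk u v)
    (hsupp : ∀ z ∈ p.support, l0 ≤ (z.1 : ℕ) ∧ (z.1 : ℕ) ≤ k - 1) :
    cycDist (2 ^ (k - 1)) (psiV k u) (psiV k v) ≤ p.length * 2 ^ (k - 1 - l0) := by
  induction p with
  | nil => rw [cyc_self]; exact Nat.zero_le _
  | @cons a b c h q ih =>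
    have ha := hsupp a (by simp)
    have hb := hsupp b (by simp [SimpleGraph.Walk.support_cons])
    have hq : ∀ z ∈ q.support, l0 ≤ (z.1 : ℕ) ∧ (z.1 : ℕ) ≤ k - 1 := by
      intro z hz; exact hsupp z (by simp [SimpleGraph.Walk.support_cons, hz])
    have hc : l0 ≤ (c.1 : ℕ) ∧ (c.1 : ℕ) ≤ k - 1 := hq c q.end_mem_support
    have h1 := edge_angle hk l0 (rrt_adj_below hk h ha.2) ha.2 hb.2 ha.1 hb.1
    have h2 := ih hq
    calc cycDist (2 ^ (k - 1)) (psiV k a) (psiV k c)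
        ≤ cycDist (2 ^ (k - 1)) (psiV k a) (psiV k b)
          + cycDist (2 ^ (k - 1)) (psiV k b) (psiV k c) :=
          cyc_triangle _ _ _ (psi_lt ha.2) (psi_lt hb.2) (psi_lt hc.2)
      _ ≤ 2 ^ (k - 1 - l0) + q.length * 2 ^ (k - 1 - l0) := by omega
      _ = (SimpleGraph.Walk.cons h q).length * 2 ^ (k - 1 - l0) := by
          rw [SimpleGraph.Walk.length_cons]; ring

end RRTaux

namespace RRTaux

variable {k : ℕ} {τ : Fin (2 ^ k) → Fin (2 ^ k)}

/-- Key deterministic lower bound: two vertices at level `k - m` whose ring distance is at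
least `2^(2m) - 2` are at graph distance at least `2m` in the whole random ringed tree. -/
lemma dist_deep (hm : 3 ≤ m) (hmk : 2 * m ≤ k) {P Q : RTV (k + 1)}
    (hP : (P.1 : ℕ) = k - m) (hQ : (Q.1 : ℕ) = k - m)
    (hD : 2 ^ (2 * m) ≤ cycDist (2 ^ (k - m)) (P.2 : ℕ) (Q.2 : ℕ) + 2) :
    2 * m ≤ (rrtGraph k τ).dist P Q := by
  have hk : 1 ≤ k := by omega
  obtain ⟨p, hp⟩ := ((rrt_connected (τ := τ)) P Q).exists_walk_length_eq_dist
  rw [← hp]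
  by_contra hlt
  push_neg at hlt
  -- case A : the walk visits level k
  rcases em (∃ z ∈ p.support, (z.1 : ℕ) = k) with ⟨z, hz, hzk⟩ | hA
  · have := walk_through P Q p hz
    omega
  -- case B : the walk visits a level ≤ k - 2m
  rcases em (∃ z ∈ p.support, (z.1 : ℕ) + 2 * m ≤ k) with ⟨z, hz, hzk⟩ | hB
  · have := walk_through P Q p hz
    omega
  -- case C : the walk stays strictly between levels k-2m and k
  push_neg at hA hB
  have hsupp : ∀ z ∈ p.support, k - 2 * m + 1 ≤ (z.1 : ℕ) ∧ (z.1 : ℕ) ≤ k - 1 := by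
    intro z hz
    have h1 := hA z hz
    have h2 := hB z hz
    have h3 : (z.1 : ℕ) < k + 1 := z.1.isLt
    omega
  have hangle := walk_angle hk (k - 2 * m + 1) p hsupp
  have hexp : k - 1 - (k - 2 * m + 1) = 2 * m - 2 := by omega
  have heP : k - 1 - (P.1 : ℕ) = m - 1 := by omega
  have heQ : k - 1 - (Q.1 : ℕ) = m - 1 := by omega
  have hpsiP : psiV k P = 2 ^ (m - 1) * (P.2 : ℕ) := by
    rw [psiV, heP, mul_comm]
  have hpsiQ : psiV k Q = 2 ^ (m - 1) * (Q.2 : ℕ) := by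
    rw [psiV, heQ, mul_comm]
  have hscale : cycDist (2 ^ (k - 1)) (psiV k P) (psiV k Q)
      = 2 ^ (m - 1) * cycDist (2 ^ (k - m)) (P.2 : ℕ) (Q.2 : ℕ) := by
    rw [hpsiP, hpsiQ, ← cyc_scale, ← pow_add]
    congr 2
    omega
  rw [hscale, hexp] at hangle
  have hsplit : 2 ^ (2 * m - 2) = 2 ^ (m - 1) * 2 ^ (m - 1) := by
    rw [← pow_add]; congr 1; omega
  rw [hsplit] at hangle
  have hangle2 : cycDist (2 ^ (k - m)) (P.2 : ℕ) (Q.2 : ℕ) ≤ p.length * 2 ^ (m - 1) := by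
    have h2 : 2 ^ (m - 1) * cycDist (2 ^ (k - m)) (P.2 : ℕ) (Q.2 : ℕ)
        ≤ 2 ^ (m - 1) * (p.length * 2 ^ (m - 1)) := by
      calc 2 ^ (m - 1) * cycDist (2 ^ (k - m)) (P.2 : ℕ) (Q.2 : ℕ)
          ≤ p.length * (2 ^ (m - 1) * 2 ^ (m - 1)) := hangle
        _ = 2 ^ (m - 1) * (p.length * 2 ^ (m - 1)) := by ring
    exact Nat.le_of_mul_le_mul_left h2 (by positivity)
  -- now get a numeric contradiction
  have hlen : p.length ≤ 2 * m - 1 := by omega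
  have hbound : p.length * 2 ^ (m - 1) ≤ (2 * m - 1) * 2 ^ (m - 1) :=
    Nat.mul_le_mul_right _ hlen
  have hnum : 2 * m - 1 ≤ 2 ^ (m + 1) - 2 := by
    have := Nat.lt_two_pow_self (n := m)
    have h2 : 2 ^ (m + 1) = 2 * 2 ^ m := by rw [pow_succ]; ring
    omega
  have hfin : (2 * m - 1) * 2 ^ (m - 1) ≤ 2 ^ (2 * m) - 2 ^ m := by
    calc (2 * m - 1) * 2 ^ (m - 1) ≤ (2 ^ (m + 1) - 2) * 2 ^ (m - 1) :=
          Nat.mul_le_mul_right _ hnum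
      _ = 2 ^ (m + 1) * 2 ^ (m - 1) - 2 * 2 ^ (m - 1) := by rw [Nat.sub_mul]
      _ = 2 ^ (2 * m) - 2 ^ m := by
          rw [← pow_add, ← pow_succ']
          congr 2 <;> omega
  have hmm : (8 : ℕ) ≤ 2 ^ m := by
    calc (8 : ℕ) = 2 ^ 3 := by norm_num
    _ ≤ 2 ^ m := Nat.pow_le_pow_right (by norm_num) hm
  have hchain : cycDist (2 ^ (k - m)) (P.2 : ℕ) (Q.2 : ℕ) ≤ 2 ^ (2 * m) - 2 ^ m :=
    le_trans hangle2 (le_trans hbound hfin)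
  have h2m : 2 ^ m ≤ 2 ^ (2 * m) := Nat.pow_le_pow_right (by norm_num) (by omega)
  omega

end RRTaux

namespace RRTaux

/-! ### real arithmetic about the four-point quantity -/

lemma max_min_sum_le {a b c : ℝ} (ha : 0 ≤ a) (hb : 0 ≤ b) (hc : 0 ≤ c) :
    max a (max b c) + min a (min b c) ≤ a + b + c := by
  have hmin1 : min a (min b c) ≤ a := min_le_left _ _
  have hmin2 : min a (min b c) ≤ b := le_trans (min_le_right _ _) (min_le_left _ _)
  have hmin3 : min a (min b c) ≤ c := le_trans (min_le_right _ _) (min_le_right _ _)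
  rcases max_cases a (max b c) with ⟨h1, h2⟩ | ⟨h1, h2⟩
  · rw [h1]; linarith
  · rw [h1]
    rcases max_cases b c with ⟨h3, h4⟩ | ⟨h3, h4⟩ <;> rw [h3] <;>
      [linarith [min_le_right a (min b c), min_le_right b c];
       linarith [min_le_left a (min b c)]]

lemma sum_le_two_max_add_min (a b c : ℝ) : a + b + c ≤ 2 * max a (max b c) + min a (min b c) := by
  have h1 : a ≤ max a (max b c) := le_max_left _ _
  have h2 : b ≤ max a (max b c) := le_trans (le_max_left _ _) (le_max_right _ _)
  have h3 : c ≤ max a (max b c) := le_trans (le_max_right _ _) (le_max_right _ _)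
  rcases min_cases a (min b c) with ⟨h4, h5⟩ | ⟨h4, h5⟩
  · rw [h4]
    rcases min_cases b c with ⟨h6, h7⟩ | ⟨h6, h7⟩ <;> linarith
  · rw [h4]
    rcases min_cases b c with ⟨h6, h7⟩ | ⟨h6, h7⟩ <;> rw [h6] <;> linarith

lemma delta3_lower (a b c : ℝ) :
    (a - max b c) / 2 ≤ (2 * max a (max b c) + min a (min b c) - (a + b + c)) / 2 := by
  rcases le_total a (max b c) with h | h
  · have h1 := sum_le_two_max_add_min a b c
    have h2 : a - max b c ≤ 0 := by linarith
    linarith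
  · have h1 : max a (max b c) = a := max_eq_left h
    have h2 : min a (min b c) = min b c := by
      refine min_eq_right ?_
      exact le_trans (le_trans (min_le_left _ _) (le_max_left b c)) h
    have h3 : min b c + max b c = b + c := min_add_max b c
    rw [h1, h2]
    linarith

lemma delta3_upper {a b c S : ℝ} (ha0 : 0 ≤ a) (hb0 : 0 ≤ b) (hc0 : 0 ≤ c)
    (ha : a ≤ S) (hb : b ≤ S) (hc : c ≤ S) :
    (2 * max a (max b c) + min a (min b c) - (a + b + c)) / 2 ≤ S / 2 := by
  have h1 := max_min_sum_le ha0 hb0 hc0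
  have h2 : max a (max b c) ≤ S := max_le ha (max_le hb hc)
  linarith

lemma deltaFour_eq {V : Type*} (G : SimpleGraph V) (u v w x : V) :
    deltaFour G u v w x =
      (2 * max ((G.dist u v : ℝ) + (G.dist w x : ℝ))
          (max ((G.dist u x : ℝ) + (G.dist v w : ℝ)) ((G.dist u w : ℝ) + (G.dist v x : ℝ)))
        + min ((G.dist u v : ℝ) + (G.dist w x : ℝ))
          (min ((G.dist u x : ℝ) + (G.dist v w : ℝ)) ((G.dist u w : ℝ) + (G.dist v x : ℝ)))
        - ((G.dist u v : ℝ) + (G.dist w x : ℝ) + ((G.dist u x : ℝ) + (G.dist v w : ℝ))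
            + ((G.dist u w : ℝ) + (G.dist v x : ℝ)))) / 2 := by
  rw [deltaFour]

lemma le_hyperbolicity {V : Type*} [Fintype V] (G : SimpleGraph V) (u v w x : V) :
    deltaFour G u v w x ≤ hyperbolicity G := by
  have B4 : ∀ (f : V → ℝ) (y : V), f y ≤ ⨆ z, f z := fun f y =>
    le_ciSup (Set.Finite.bddAbove (Set.finite_range f)) y
  calc deltaFour G u v w x ≤ ⨆ x', deltaFour G u v w x' := B4 _ x
    _ ≤ ⨆ w', ⨆ x', deltaFour G u v w' x' := B4 (fun w' => ⨆ x', deltaFour G u v w' x') w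
    _ ≤ ⨆ v', ⨆ w', ⨆ x', deltaFour G u v' w' x' :=
        B4 (fun v' => ⨆ w', ⨆ x', deltaFour G u v' w' x') v
    _ ≤ hyperbolicity G := B4 (fun u' => ⨆ v', ⨆ w', ⨆ x', deltaFour G u' v' w' x') u

lemma hyperbolicity_le {V : Type*} [Fintype V] [Nonempty V] (G : SimpleGraph V) {B : ℝ}
    (hB : ∀ u v w x, deltaFour G u v w x ≤ B) : hyperbolicity G ≤ B :=
  ciSup_le fun u => ciSup_le fun v => ciSup_le fun w => ciSup_le fun x => hB u v w x

end RRTaux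

namespace RRTaux

variable {k : ℕ} {τ : Fin (2 ^ k) → Fin (2 ^ k)}

lemma dist_le_two_k (u v : RTV (k + 1)) : (rrtGraph k τ).dist u v ≤ 2 * k := by
  have h1 : (rrtGraph k τ).dist u v
      ≤ (rrtGraph k τ).dist u (rootV k) + (rrtGraph k τ).dist (rootV k) v :=
    (rrt_connected (τ := τ)).dist_triangle
  have h2 := dist_root (τ := τ) u
  have h3 := dist_root (τ := τ) v
  have h4 : (rrtGraph k τ).dist (rootV k) v = (rrtGraph k τ).dist v (rootV k) :=
    SimpleGraph.dist_comm
  have h5 : (u.1 : ℕ) ≤ k := by have := u.1.isLt; omega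
  have h6 : (v.1 : ℕ) ≤ k := by have := v.1.isLt; omega
  omega

lemma hyp_upper : hyperbolicity (rrtGraph k τ) ≤ 2 * (k : ℝ) := by
  have : Nonempty (RTV (k + 1)) := ⟨rootV k⟩
  have h2k : (2 : ℝ) * k = (4 * k : ℝ) / 2 := by ring
  rw [h2k]
  apply hyperbolicity_le
  intro u v w x
  rw [deltaFour_eq]
  have hb : ∀ y z : RTV (k + 1), ((rrtGraph k τ).dist y z : ℝ) ≤ 2 * k := by
    intro y z
    have := dist_le_two_k (τ := τ) y z
    calc ((rrtGraph k τ).dist y z : ℝ) ≤ ((2 * k : ℕ) : ℝ) := Nat.cast_le.mpr this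
    _ = 2 * (k : ℝ) := by push_cast; ring
  have hpos : ∀ y z : RTV (k + 1), (0 : ℝ) ≤ ((rrtGraph k τ).dist y z : ℝ) := by
    intro y z; positivity
  apply delta3_upper <;>
    [positivity; positivity; positivity;
     linarith [hb u v, hb w x]; linarith [hb u x, hb v w]; linarith [hb u w, hb v x]]

lemma leafE_lvl (m : Fin (2 ^ k)) : ((leafE k m).1 : ℕ) = k := rfl
lemma leafE_val (m : Fin (2 ^ k)) : ((leafE k m).2 : ℕ) = (m : ℕ) := rfl


/-- ring distance of the `m`-fold ancestors of two leaves. -/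
lemma anc_ring_dist {k m : ℕ} (hm : 1 ≤ m) (hmk : m ≤ k) {a b : ℕ}
    (ha : a < 2 ^ k) (hb : b < 2 ^ k) (hL : 2 ^ (3 * m) ≤ cycDist (2 ^ k) a b) :
    2 ^ (2 * m) ≤ cycDist (2 ^ (k - m)) (a / 2 ^ m) (b / 2 ^ m) + 2 := by
  set D := cycDist (2 ^ (k - m)) (a / 2 ^ m) (b / 2 ^ m) with hDdef
  by_contra hcon
  push_neg at hcon
  have hDle : D ≤ 2 ^ (2 * m) - 3 := by omega
  have hmod := Nat.div_add_mod a (2 ^ m)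
  have hmod2 := Nat.div_add_mod b (2 ^ m)
  have hmlt : a % 2 ^ m < 2 ^ m := Nat.mod_lt _ (by positivity)
  have hmlt2 : b % 2 ^ m < 2 ^ m := Nat.mod_lt _ (by positivity)
  have hb1 : 2 ^ m * (a / 2 ^ m) < 2 ^ k := by omega
  have hb2 : 2 ^ m * (b / 2 ^ m) < 2 ^ k := by omega
  have hsplitk : 2 ^ k = 2 ^ m * 2 ^ (k - m) := by rw [← pow_add]; congr 1; omega
  have ht1 : cycDist (2 ^ k) a b
      ≤ cycDist (2 ^ k) a (2 ^ m * (a / 2 ^ m))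
        + cycDist (2 ^ k) (2 ^ m * (a / 2 ^ m)) b :=
    cyc_triangle _ _ _ ha hb1 hb
  have ht2 : cycDist (2 ^ k) (2 ^ m * (a / 2 ^ m)) b
      ≤ cycDist (2 ^ k) (2 ^ m * (a / 2 ^ m)) (2 ^ m * (b / 2 ^ m))
        + cycDist (2 ^ k) (2 ^ m * (b / 2 ^ m)) b :=
    cyc_triangle _ _ _ hb1 hb2 hb
  have he1 : cycDist (2 ^ k) a (2 ^ m * (a / 2 ^ m)) ≤ 2 ^ m - 1 := by
    refine le_trans (cyc_le_natdist _ _ _) ?_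
    rw [natdist_def]
    omega
  have he2 : cycDist (2 ^ k) (2 ^ m * (b / 2 ^ m)) b ≤ 2 ^ m - 1 := by
    refine le_trans (cyc_le_natdist _ _ _) ?_
    rw [natdist_def]
    omega
  have hsc : cycDist (2 ^ k) (2 ^ m * (a / 2 ^ m)) (2 ^ m * (b / 2 ^ m)) = 2 ^ m * D := by
    rw [hsplitk, cyc_scale, hDdef]
  have hZY : 2 ^ m * 2 ^ (2 * m) = 2 ^ (3 * m) := by rw [← pow_add]; congr 1; ring
  have hmain : 2 ^ m * D ≤ 2 ^ (3 * m) - 3 * 2 ^ m := by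
    calc 2 ^ m * D = D * 2 ^ m := Nat.mul_comm _ _
    _ ≤ (2 ^ (2 * m) - 3) * 2 ^ m := Nat.mul_le_mul_right _ hDle
    _ = 2 ^ (2 * m) * 2 ^ m - 3 * 2 ^ m := Nat.sub_mul _ _ _
    _ = 2 ^ (3 * m) - 3 * 2 ^ m := by rw [← pow_add]; congr 2; ring
  have h4Z : 2 ^ m * 4 ≤ 2 ^ (3 * m) := by
    rw [← hZY]
    refine Nat.mul_le_mul_left _ ?_
    calc (4 : ℕ) = 2 ^ 2 := by norm_num
    _ ≤ 2 ^ (2 * m) := Nat.pow_le_pow_right (by norm_num) (by omega)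
  omega

/-- Main deterministic lower bound: a long-range edge of ring length at least `2^(3m)`
forces hyperbolicity at least `m - 1/2`. -/
lemma hyp_lower (m : ℕ) (hm : 5 ≤ m) (hmk : 3 * m + 2 ≤ k) (v₀ : Fin (2 ^ k))
    (hL : 2 ^ (3 * m) ≤ cycDist (2 ^ k) (v₀ : ℕ) ((τ v₀ : ℕ))) :
    (m : ℝ) - 1 / 2 ≤ hyperbolicity (rrtGraph k τ) := by
  set u₀ : Fin (2 ^ k) := τ v₀ with hu₀
  have hkm : m ≤ k := by omega
  have hpow_pos : 0 < 2 ^ (3 * m) := by positivity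
  have hne : (v₀ : ℕ) ≠ (u₀ : ℕ) := by
    intro h
    rw [h, cyc_self] at hL
    omega
  -- the four vertices
  set A : RTV (k + 1) := leafE k v₀ with hA
  set R : RTV (k + 1) := rootV k with hR
  set P : RTV (k + 1) := ancV (leafE k u₀) m with hP
  set Q : RTV (k + 1) := ancV (leafE k v₀) m with hQ
  have hPl : (P.1 : ℕ) = k - m := rfl
  have hQl : (Q.1 : ℕ) = k - m := rfl
  have hPv : (P.2 : ℕ) = (u₀ : ℕ) / 2 ^ m := rfl
  have hQv : (Q.2 : ℕ) = (v₀ : ℕ) / 2 ^ m := rfl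
  -- distance facts
  have d1 : (rrtGraph k τ).dist A R = k := dist_root_eq A
  have d3 : (rrtGraph k τ).dist A Q ≤ m := dist_anc (leafE k v₀) m (by rw [leafE_lvl]; omega)
  have d4P : (rrtGraph k τ).dist R P ≤ k - m := by
    rw [SimpleGraph.dist_comm]
    have h := dist_root (τ := τ) P
    exact le_trans h (le_of_eq hPl)
  have d4Q : (rrtGraph k τ).dist R Q ≤ k - m := by
    rw [SimpleGraph.dist_comm]
    have h := dist_root (τ := τ) Q
    exact le_trans h (le_of_eq hQl)
  have hlr : (rrtGraph k τ).Adj A (leafE k u₀) := by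
    refine Or.inr ⟨?_, v₀, Or.inl ⟨rfl, rfl⟩⟩
    intro h
    exact hne (congrArg (fun z : RTV (k + 1) => (z.2 : ℕ)) h)
  have d5 : (rrtGraph k τ).dist A P ≤ m + 1 := by
    have h1 : (rrtGraph k τ).dist A P
        ≤ (rrtGraph k τ).dist A (leafE k u₀) + (rrtGraph k τ).dist (leafE k u₀) P :=
      (rrt_connected (τ := τ)).dist_triangle
    have h2 := dist_le_one_of_adj hlr
    have h3 : (rrtGraph k τ).dist (leafE k u₀) P ≤ m :=
      dist_anc (leafE k u₀) m (by rw [leafE_lvl]; omega)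
    omega
  -- the ring-distance of the two ancestors
  have hD : 2 ^ (2 * m) ≤ cycDist (2 ^ (k - m)) (P.2 : ℕ) (Q.2 : ℕ) + 2 := by
    rw [hPv, hQv]
    exact anc_ring_dist (by omega) hkm u₀.isLt v₀.isLt (by rw [cyc_comm]; exact hL)
  have d2 : 2 * m ≤ (rrtGraph k τ).dist P Q :=
    dist_deep (by omega) (by omega) hPl hQl hD
  -- assemble the four-point bound
  have hstep : ((m : ℝ) + m) - 1 / 2
      ≤ (((rrtGraph k τ).dist A R : ℝ) + ((rrtGraph k τ).dist P Q : ℝ)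
        - max (((rrtGraph k τ).dist A Q : ℝ) + ((rrtGraph k τ).dist R P : ℝ))
            (((rrtGraph k τ).dist A P : ℝ) + ((rrtGraph k τ).dist R Q : ℝ))) / 2 + m := by
    have c1 : ((rrtGraph k τ).dist A R : ℝ) = k := by rw [d1]
    have c2 : (2 * m : ℝ) ≤ ((rrtGraph k τ).dist P Q : ℝ) := by
      have : ((2 * m : ℕ) : ℝ) ≤ ((rrtGraph k τ).dist P Q : ℝ) := Nat.cast_le.mpr d2
      push_cast at this
      linarith
    have c3 : ((rrtGraph k τ).dist A Q : ℝ) + ((rrtGraph k τ).dist R P : ℝ) ≤ k := by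
      have e3 : ((rrtGraph k τ).dist A Q : ℝ) ≤ m := by
        have := (Nat.cast_le (α := ℝ)).mpr d3; push_cast at this; linarith
      have e4 : ((rrtGraph k τ).dist R P : ℝ) ≤ ((k : ℝ) - m) := by
        have := (Nat.cast_le (α := ℝ)).mpr d4P; push_cast at this
        have hc : ((k - m : ℕ) : ℝ) = (k : ℝ) - m := by
          rw [Nat.cast_sub hkm]
        linarith [hc ▸ this]
      linarith
    have c4 : ((rrtGraph k τ).dist A P : ℝ) + ((rrtGraph k τ).dist R Q : ℝ) ≤ k + 1 := by
      have e5 : ((rrtGraph k τ).dist A P : ℝ) ≤ m + 1 := by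
        have := (Nat.cast_le (α := ℝ)).mpr d5; push_cast at this; linarith
      have e6 : ((rrtGraph k τ).dist R Q : ℝ) ≤ ((k : ℝ) - m) := by
        have := (Nat.cast_le (α := ℝ)).mpr d4Q; push_cast at this
        have hc : ((k - m : ℕ) : ℝ) = (k : ℝ) - m := by
          rw [Nat.cast_sub hkm]
        linarith [hc ▸ this]
      linarith
    have c5 : max (((rrtGraph k τ).dist A Q : ℝ) + ((rrtGraph k τ).dist R P : ℝ))
        (((rrtGraph k τ).dist A P : ℝ) + ((rrtGraph k τ).dist R Q : ℝ)) ≤ (k : ℝ) + 1 :=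
      max_le (by linarith) c4
    rw [c1]
    linarith
  have hfinal : (m : ℝ) - 1 / 2 ≤ deltaFour (rrtGraph k τ) A R P Q := by
    rw [deltaFour_eq]
    have := delta3_lower (((rrtGraph k τ).dist A R : ℝ) + ((rrtGraph k τ).dist P Q : ℝ))
      (((rrtGraph k τ).dist A Q : ℝ) + ((rrtGraph k τ).dist R P : ℝ))
      (((rrtGraph k τ).dist A P : ℝ) + ((rrtGraph k τ).dist R Q : ℝ))
    linarith
  exact le_trans hfinal (le_hyperbolicity _ A R P Q)

end RRTaux

namespace RRTaux

open MeasureTheory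
open scoped ENNReal

/-- The weight function appearing in the theorem statement. -/
noncomputable def gfun (k : ℕ) (α : ℝ) : Fin (2 ^ k) → Fin (2 ^ k) → ℝ :=
  fun u v => ((cycDist (2 ^ k) (u : ℕ) (v : ℕ) : ℕ) : ℝ) ^ (-α)

/-- The one-coordinate distribution of the long-range contact of leaf `v`. -/
noncomputable def muv (k : ℕ) (α : ℝ) (v : Fin (2 ^ k)) : Measure (Fin (2 ^ k)) :=
  (∑ u : Fin (2 ^ k), leafWeight k (gfun k α) v u)⁻¹ •
    ∑ u : Fin (2 ^ k), leafWeight k (gfun k α) v u • Measure.dirac u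

lemma leafChoice_eq (k : ℕ) (α : ℝ) :
    leafChoiceMeasure k (gfun k α) = Measure.pi (muv k α) := rfl

lemma muv_apply (k : ℕ) (α : ℝ) (v : Fin (2 ^ k)) (t : Finset (Fin (2 ^ k))) :
    muv k α v ↑t = (∑ u : Fin (2 ^ k), leafWeight k (gfun k α) v u)⁻¹
      * ∑ u ∈ t, leafWeight k (gfun k α) v u := by
  rw [muv, Measure.smul_apply, Measure.finset_sum_apply]
  simp only [Measure.smul_apply, Measure.dirac_apply, smul_eq_mul]
  congr 1
  have : ∀ u : Fin (2 ^ k),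
      leafWeight k (gfun k α) v u * Set.indicator (↑t) 1 u
        = if u ∈ t then leafWeight k (gfun k α) v u else 0 := by
    intro u
    by_cases h : u ∈ t <;> simp [Set.indicator_apply, h]
  rw [Finset.sum_congr rfl fun u _ => this u, Finset.sum_ite_mem, Finset.univ_inter]

lemma cyc_pos {N a b : ℕ} (ha : a < N) (hb : b < N) (hne : a ≠ b) : 1 ≤ cycDist N a b := by
  rcases Nat.eq_zero_or_pos (cycDist N a b) with h | h
  · exact absurd (cyc_eq_zero ha hb h) hne
  · exact h

lemma weight_le_one {α : ℝ} (hα : 0 < α) (k : ℕ) (v u : Fin (2 ^ k)) :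
    leafWeight k (gfun k α) v u ≤ 1 := by
  rw [leafWeight]
  split_ifs with h
  · exact zero_le_one
  · rw [gfun]
    refine le_trans (ENNReal.ofReal_le_ofReal ?_) (le_of_eq ENNReal.ofReal_one)
    refine Real.rpow_le_one_of_one_le_of_nonpos ?_ (by linarith)
    have h1 : 1 ≤ cycDist (2 ^ k) (u : ℕ) (v : ℕ) :=
      cyc_pos u.isLt v.isLt (fun he => h (Fin.ext he))
    exact_mod_cast h1

lemma weight_ne_top {α : ℝ} (k : ℕ) (v u : Fin (2 ^ k)) :
    leafWeight k (gfun k α) v u ≠ ∞ := by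
  rw [leafWeight]; split_ifs <;> simp

/-- The normalizing constant is nonzero. -/
lemma Z_ne_zero {α : ℝ} (k : ℕ) (hk : 1 ≤ k) (v : Fin (2 ^ k)) :
    (∑ u : Fin (2 ^ k), leafWeight k (gfun k α) v u) ≠ 0 := by
  have hN : 2 ≤ 2 ^ k := by calc (2:ℕ) = 2 ^ 1 := rfl
                                _ ≤ 2 ^ k := Nat.pow_le_pow_right (by norm_num) hk
  set u₁ : Fin (2 ^ k) := ⟨((v : ℕ) + 1) % 2 ^ k, Nat.mod_lt _ (by positivity)⟩ with hu₁
  have hcyc : cycDist (2 ^ k) (v : ℕ) (u₁ : ℕ) = 1 := cyc_offset v.isLt (by omega)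
  have hne : u₁ ≠ v := by
    intro h
    rw [h, cyc_self] at hcyc
    omega
  have hw : leafWeight k (gfun k α) v u₁ = 1 := by
    rw [leafWeight, if_neg hne, gfun, cyc_comm, hcyc]
    simp [Real.one_rpow]
  intro hZ
  have h1 : leafWeight k (gfun k α) v u₁ ≤ 0 := by
    rw [← hZ]
    exact Finset.single_le_sum (fun u _ => zero_le) (Finset.mem_univ u₁)
  rw [hw] at h1
  simp at h1

lemma Z_ne_top {α : ℝ} (k : ℕ) (v : Fin (2 ^ k)) :
    (∑ u : Fin (2 ^ k), leafWeight k (gfun k α) v u) ≠ ∞ :=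
  (ENNReal.sum_lt_top.mpr fun u _ => (weight_ne_top k v u).lt_top).ne

lemma muv_prob {α : ℝ} (k : ℕ) (hk : 1 ≤ k) (v : Fin (2 ^ k)) :
    IsProbabilityMeasure (muv k α v) := by
  constructor
  have h1 : (Set.univ : Set (Fin (2 ^ k))) = ↑(Finset.univ : Finset (Fin (2 ^ k))) := by
    simp
  rw [h1, muv_apply]
  exact ENNReal.inv_mul_cancel (Z_ne_zero k hk v) (Z_ne_top k v)

end RRTaux

namespace RRTaux

open MeasureTheory
open scoped ENNReal

lemma rpow_anti {α x y : ℝ} (hα : 0 < α) (hx : 0 < x) (hxy : x ≤ y) :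
    y ^ (-α) ≤ x ^ (-α) := by
  rw [Real.rpow_neg (le_of_lt hx), Real.rpow_neg (by linarith)]
  have h2 : x ^ α ≤ y ^ α := Real.rpow_le_rpow (le_of_lt hx) hxy (le_of_lt hα)
  have h3 : 0 < x ^ α := Real.rpow_pos_of_pos hx α
  exact inv_anti₀ h3 h2

/-- The central estimate: for each leaf `v`, with probability at least
`(3 (2T)^α)⁻¹` (where `T = 2^(3m)`), the long-range contact of `v` is at
ring distance at least `T`. -/
lemma muv_bad {α : ℝ} (hα : 0 < α) (k m : ℕ) (hm : 1 ≤ m) (hmk : 3 * m + 2 ≤ k)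
    (v : Fin (2 ^ k)) :
    muv k α v ↑(Finset.univ.filter
        (fun u : Fin (2 ^ k) => ¬ 2 ^ (3 * m) ≤ cycDist (2 ^ k) (u : ℕ) (v : ℕ)))
      ≤ 1 - ENNReal.ofReal ((3 * ((2 ^ (3 * m + 1) : ℕ) : ℝ) ^ α)⁻¹) := by
  have hk : 1 ≤ k := by omega
  set T := 2 ^ (3 * m) with hT
  set B : ℝ := ((2 ^ (3 * m + 1) : ℕ) : ℝ) with hB
  have hB2T : B = 2 * (T : ℝ) := by rw [hB, hT]; push_cast; ring
  have hBpos : 0 < B := by rw [hB]; positivity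
  have hB1 : 1 ≤ B := by
    rw [hB]
    exact_mod_cast Nat.one_le_two_pow
  have hT1 : 1 ≤ T := Nat.one_le_two_pow
  have hTN : 4 * T ≤ 2 ^ k := by
    rw [hT]
    calc 4 * 2 ^ (3 * m) = 2 ^ (3 * m + 2) := by ring
    _ ≤ 2 ^ k := Nat.pow_le_pow_right (by norm_num) hmk
  have hNpos : 0 < 2 ^ k := Nat.pow_pos (by norm_num)
  set w : Fin (2 ^ k) → ℝ≥0∞ := fun u => leafWeight k (gfun k α) v u with hw
  set pgood : Fin (2 ^ k) → Prop := fun u => T ≤ cycDist (2 ^ k) (u : ℕ) (v : ℕ) with hpgood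
  set Goodf : Finset (Fin (2 ^ k)) := Finset.univ.filter pgood with hGoodf
  set Badf : Finset (Fin (2 ^ k)) := Finset.univ.filter (fun u => ¬ pgood u) with hBadf
  set Z : ℝ≥0∞ := ∑ u : Fin (2 ^ k), w u with hZ
  set Sg : ℝ≥0∞ := ∑ u ∈ Goodf, w u with hSg
  set Sb : ℝ≥0∞ := ∑ u ∈ Badf, w u with hSb
  -- part 1 : lower bound for the good sum
  have hf : ∀ i : ℕ, ((v : ℕ) + (T + i)) % 2 ^ k < 2 ^ k := fun i => Nat.mod_lt _ hNpos
  set f : ℕ → Fin (2 ^ k) := fun i => ⟨((v : ℕ) + (T + i)) % 2 ^ k, hf i⟩ with hfdef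
  have hcycf : ∀ i < T, cycDist (2 ^ k) (v : ℕ) ((f i : ℕ)) = T + i := by
    intro i hi
    exact cyc_offset v.isLt (by omega)
  have hfgood : ∀ i < T, f i ∈ Goodf := by
    intro i hi
    rw [hGoodf, Finset.mem_filter]
    refine ⟨Finset.mem_univ _, ?_⟩
    show T ≤ cycDist (2 ^ k) ((f i : ℕ)) (v : ℕ)
    rw [cyc_comm, hcycf i hi]
    omega
  have hfne : ∀ i < T, f i ≠ v := by
    intro i hi h
    have := hcycf i hi
    rw [h, cyc_self] at this
    omega
  have hwf : ∀ i < T, ENNReal.ofReal (B ^ (-α)) ≤ w (f i) := by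
    intro i hi
    show ENNReal.ofReal (B ^ (-α)) ≤ leafWeight k (gfun k α) v (f i)
    rw [leafWeight, if_neg (hfne i hi), gfun]
    apply ENNReal.ofReal_le_ofReal
    have hc : cycDist (2 ^ k) ((f i : ℕ)) (v : ℕ) = T + i := by
      rw [cyc_comm, hcycf i hi]
    rw [hc]
    apply rpow_anti hα (by positivity : (0:ℝ) < ((T + i : ℕ) : ℝ)) ?_
    rw [hB2T]
    have : T + i ≤ 2 * T := by omega
    exact_mod_cast this
  have hfinj : ∀ i ∈ Finset.range T, ∀ j ∈ Finset.range T, f i = f j → i = j := by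
    intro i hi j hj h
    rw [Finset.mem_range] at hi hj
    have hval : ((v : ℕ) + T + i) % 2 ^ k = ((v : ℕ) + T + j) % 2 ^ k := by
      have := congrArg Fin.val h
      simpa [hfdef, Nat.add_assoc] using this
    have hmodeq : i ≡ j [MOD 2 ^ k] := Nat.ModEq.add_left_cancel' ((v : ℕ) + T) hval
    have : i % 2 ^ k = j % 2 ^ k := hmodeq
    rwa [Nat.mod_eq_of_lt (by omega), Nat.mod_eq_of_lt (by omega)] at this
  have hG0 : (T : ℝ≥0∞) * ENNReal.ofReal (B ^ (-α)) ≤ Sg := by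
    have h1 : ∑ i ∈ Finset.range T, w (f i) ≤ Sg := by
      rw [← Finset.sum_image hfinj]
      refine Finset.sum_le_sum_of_subset ?_
      intro u hu
      rw [Finset.mem_image] at hu
      obtain ⟨i, hi, rfl⟩ := hu
      exact hfgood i (Finset.mem_range.mp hi)
    refine le_trans ?_ h1
    have h2 := Finset.card_nsmul_le_sum (Finset.range T) (fun i => w (f i))
      (ENNReal.ofReal (B ^ (-α))) (fun i hi => hwf i (Finset.mem_range.mp hi))
    rwa [Finset.card_range, nsmul_eq_mul] at h2
  -- part 2 : upper bound for the bad sum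
  have hcard : Badf.card ≤ 2 * T := by
    have hg : ∀ i : ℕ, ((v : ℕ) + i) % 2 ^ k < 2 ^ k := fun i => Nat.mod_lt _ hNpos
    set g1 : ℕ → Fin (2 ^ k) := fun i => ⟨((v : ℕ) + i) % 2 ^ k, hg i⟩ with hg1
    set g2 : ℕ → Fin (2 ^ k) := fun i => ⟨((v : ℕ) + (2 ^ k - i)) % 2 ^ k, hg _⟩ with hg2
    have hsub : Badf ⊆ (Finset.range T).image g1 ∪ (Finset.range T).image g2 := by
      intro u hu
      rw [hBadf, Finset.mem_filter, hpgood] at hu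
      have hlt : cycDist (2 ^ k) (u : ℕ) (v : ℕ) < T := by omega
      have hub := u.isLt
      have hvb := v.isLt
      rw [Finset.mem_union]
      rcases le_or_gt (v : ℕ) (u : ℕ) with hvu | hvu
      · have hdist : Nat.dist (u : ℕ) (v : ℕ) = (u : ℕ) - (v : ℕ) :=
          Nat.dist_eq_sub_of_le_right hvu
        rw [cycDist, hdist] at hlt
        rcases Nat.lt_or_ge ((u : ℕ) - (v : ℕ)) T with ho | ho
        · left
          rw [Finset.mem_image]
          refine ⟨(u : ℕ) - (v : ℕ), Finset.mem_range.mpr ho, Fin.ext ?_⟩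
          show ((v : ℕ) + ((u : ℕ) - (v : ℕ))) % 2 ^ k = (u : ℕ)
          rw [Nat.mod_eq_of_lt (by omega)]
          omega
        · right
          rw [Finset.mem_image]
          refine ⟨2 ^ k - ((u : ℕ) - (v : ℕ)), Finset.mem_range.mpr (by omega), Fin.ext ?_⟩
          show ((v : ℕ) + (2 ^ k - (2 ^ k - ((u : ℕ) - (v : ℕ))))) % 2 ^ k = (u : ℕ)
          rw [Nat.sub_sub_self (by omega), Nat.mod_eq_of_lt (by omega)]
          omega
      · have hdist : Nat.dist (u : ℕ) (v : ℕ) = (v : ℕ) - (u : ℕ) :=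
          Nat.dist_eq_sub_of_le (by omega)
        rw [cycDist, hdist] at hlt
        have hkey : ((v : ℕ) + (2 ^ k - ((v : ℕ) - (u : ℕ)))) % 2 ^ k = (u : ℕ) := by
          have h1 : (v : ℕ) + (2 ^ k - ((v : ℕ) - (u : ℕ))) = (u : ℕ) + 2 ^ k := by omega
          rw [h1, Nat.add_mod_right, Nat.mod_eq_of_lt hub]
        rcases Nat.lt_or_ge ((v : ℕ) - (u : ℕ)) T with ho | ho
        · right
          rw [Finset.mem_image]
          exact ⟨(v : ℕ) - (u : ℕ), Finset.mem_range.mpr ho, Fin.ext hkey⟩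
        · left
          rw [Finset.mem_image]
          refine ⟨2 ^ k - ((v : ℕ) - (u : ℕ)), Finset.mem_range.mpr (by omega), Fin.ext ?_⟩
          show ((v : ℕ) + (2 ^ k - ((v : ℕ) - (u : ℕ)))) % 2 ^ k = (u : ℕ)
          exact hkey
    calc Badf.card ≤ ((Finset.range T).image g1 ∪ (Finset.range T).image g2).card :=
          Finset.card_le_card hsub
    _ ≤ ((Finset.range T).image g1).card + ((Finset.range T).image g2).card :=
          Finset.card_union_le _ _
    _ ≤ T + T := Nat.add_le_add
          (le_trans (Finset.card_image_le) (by rw [Finset.card_range]))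
          (le_trans (Finset.card_image_le) (by rw [Finset.card_range]))
    _ = 2 * T := by ring
  have hSb_le : Sb ≤ ((2 * T : ℕ) : ℝ≥0∞) := by
    have h1 : Sb ≤ Badf.card • (1 : ℝ≥0∞) :=
      Finset.sum_le_card_nsmul _ _ _ (fun u _ => weight_le_one hα k v u)
    rw [nsmul_eq_mul, mul_one] at h1
    exact le_trans h1 (by exact_mod_cast hcard)
  -- part 3 : Z in terms of Sg
  have hZsplit : Sg + Sb = Z := by
    rw [hSg, hSb, hZ, hGoodf, hBadf]
    exact Finset.sum_filter_add_sum_filter_not _ _ _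
  have hq1 : 1 ≤ B ^ α := Real.one_le_rpow hB1 (le_of_lt hα)
  have hqpos : 0 < B ^ α := Real.rpow_pos_of_pos hBpos α
  have h2T : ((2 * T : ℕ) : ℝ≥0∞)
      = ENNReal.ofReal (2 * B ^ α) * ((T : ℝ≥0∞) * ENNReal.ofReal (B ^ (-α))) := by
    rw [← ENNReal.ofReal_natCast (2 * T), ← ENNReal.ofReal_natCast T,
      ← ENNReal.ofReal_mul (by positivity), ← ENNReal.ofReal_mul (by positivity)]
    congr 1
    have hBB : B ^ α * B ^ (-α) = 1 := by
      rw [← Real.rpow_add hBpos, add_neg_cancel, Real.rpow_zero]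
    push_cast
    nlinarith [hBB]
  have hZle : Z ≤ ENNReal.ofReal (3 * B ^ α) * Sg := by
    have h1 : Z ≤ ENNReal.ofReal (2 * B ^ α) * Sg + Sg := by
      rw [← hZsplit, add_comm]
      refine add_le_add ?_ le_rfl
      calc Sb ≤ ((2 * T : ℕ) : ℝ≥0∞) := hSb_le
      _ = ENNReal.ofReal (2 * B ^ α) * ((T : ℝ≥0∞) * ENNReal.ofReal (B ^ (-α))) := h2T
      _ ≤ ENNReal.ofReal (2 * B ^ α) * Sg := mul_le_mul_right hG0 _
    refine le_trans h1 ?_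
    have h2 : ENNReal.ofReal (2 * B ^ α) * Sg + Sg = (ENNReal.ofReal (2 * B ^ α) + 1) * Sg := by
      ring
    rw [h2]
    refine mul_le_mul_left ?_ _
    rw [← ENNReal.ofReal_one, ← ENNReal.ofReal_add (by positivity) (by norm_num)]
    apply ENNReal.ofReal_le_ofReal
    linarith
  -- part 4 : Sg is nondegenerate
  have hSg_ne_zero : Sg ≠ 0 := by
    intro h
    rw [h] at hG0
    have h3 : (T : ℝ≥0∞) * ENNReal.ofReal (B ^ (-α)) = 0 := le_antisymm hG0 zero_le
    rw [mul_eq_zero] at h3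
    rcases h3 with h3 | h3
    · rw [Nat.cast_eq_zero] at h3; omega
    · rw [ENNReal.ofReal_eq_zero] at h3
      have : (0:ℝ) < B ^ (-α) := Real.rpow_pos_of_pos hBpos _
      linarith
  have hSg_ne_top : Sg ≠ ∞ := by
    have h1 : Sg ≤ Z := by
      rw [← hZsplit]; exact le_self_add
    exact (lt_of_le_of_lt h1 (lt_of_le_of_ne le_top (Z_ne_top k v))).ne
  -- part 5 : the good measure is at least ofReal ((3 B^α)⁻¹)
  have hmu_good : ENNReal.ofReal ((3 * B ^ α)⁻¹) ≤ muv k α v ↑Goodf := by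
    rw [muv_apply]
    have h1 : (ENNReal.ofReal (3 * B ^ α) * Sg)⁻¹ ≤ Z⁻¹ := ENNReal.inv_le_inv' hZle
    have h2 : (ENNReal.ofReal (3 * B ^ α) * Sg)⁻¹ * Sg ≤ Z⁻¹ * Sg := mul_le_mul_left h1 _
    have h3 : (ENNReal.ofReal (3 * B ^ α) * Sg)⁻¹ * Sg = (ENNReal.ofReal (3 * B ^ α))⁻¹ := by
      rw [ENNReal.mul_inv (Or.inr hSg_ne_top) (Or.inr hSg_ne_zero), mul_assoc,
        ENNReal.inv_mul_cancel hSg_ne_zero hSg_ne_top, mul_one]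
    rw [← ENNReal.ofReal_inv_of_pos (by positivity)] at h3
    rw [← h3]
    exact h2
  -- part 6 : conclude for the bad set
  haveI : IsProbabilityMeasure (muv k α v) := muv_prob k hk v
  have h1 : muv k α v ↑Badf = 1 - muv k α v ↑Goodf := by
    have hcompl : (↑Badf : Set (Fin (2 ^ k))) = (↑Goodf : Set (Fin (2 ^ k)))ᶜ := by
      ext u
      simp [hBadf, hGoodf]
    rw [hcompl, measure_compl (MeasurableSet.of_discrete) (measure_ne_top _ _), measure_univ]
  show muv k α v ↑Badf ≤ 1 - ENNReal.ofReal ((3 * B ^ α)⁻¹)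
  rw [h1]
  exact tsub_le_tsub_left hmu_good 1

end RRTaux

namespace RRTaux

open MeasureTheory Filter
open scoped ENNReal

/-- The "bad" contacts of leaf `v` : those at ring distance less than `2^(3m)`. -/
def badf (k m : ℕ) (v : Fin (2 ^ k)) : Finset (Fin (2 ^ k)) :=
  Finset.univ.filter (fun u : Fin (2 ^ k) => ¬ 2 ^ (3 * m) ≤ cycDist (2 ^ k) (u : ℕ) (v : ℕ))

lemma q_le_one {α : ℝ} (hα : 0 < α) (m : ℕ) :
    0 ≤ (3 * ((2 ^ (3 * m + 1) : ℕ) : ℝ) ^ α)⁻¹ ∧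
    (3 * ((2 ^ (3 * m + 1) : ℕ) : ℝ) ^ α)⁻¹ ≤ 1 / 3 := by
  have hB1 : (1:ℝ) ≤ ((2 ^ (3 * m + 1) : ℕ) : ℝ) := by exact_mod_cast Nat.one_le_two_pow
  have hq1 : (1:ℝ) ≤ ((2 ^ (3 * m + 1) : ℕ) : ℝ) ^ α := Real.one_le_rpow hB1 (le_of_lt hα)
  constructor
  · positivity
  · rw [one_div]
    exact inv_anti₀ (by norm_num) (by linarith)

lemma allbad_le {α : ℝ} (hα : 0 < α) (k m : ℕ) (hm : 1 ≤ m) (hmk : 3 * m + 2 ≤ k) :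
    Measure.pi (muv k α) (Set.univ.pi fun v => ↑(badf k m v))
      ≤ ENNReal.ofReal ((1 - (3 * ((2 ^ (3 * m + 1) : ℕ) : ℝ) ^ α)⁻¹) ^ (2 ^ k)) := by
  have hk : 1 ≤ k := by omega
  haveI : ∀ v : Fin (2 ^ k), SigmaFinite (muv k α v) := fun v => by
    haveI := muv_prob (α := α) k hk v
    infer_instance
  set q : ℝ := (3 * ((2 ^ (3 * m + 1) : ℕ) : ℝ) ^ α)⁻¹ with hq
  obtain ⟨hq0, hq3⟩ := q_le_one hα (α := α) m
  rw [Measure.pi_pi]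
  have h1 : ∀ v : Fin (2 ^ k), muv k α v ↑(badf k m v) ≤ 1 - ENNReal.ofReal q :=
    fun v => muv_bad hα k m hm hmk v
  calc (∏ v : Fin (2 ^ k), muv k α v ↑(badf k m v))
      ≤ ∏ _v : Fin (2 ^ k), (1 - ENNReal.ofReal q) :=
        Finset.prod_le_prod' (fun v _ => h1 v)
  _ = (1 - ENNReal.ofReal q) ^ (2 ^ k) := by
      rw [Finset.prod_const, Finset.card_univ, Fintype.card_fin]
  _ = ENNReal.ofReal ((1 - q) ^ (2 ^ k)) := by
      rw [← ENNReal.ofReal_one, ← ENNReal.ofReal_sub _ hq0,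
        ENNReal.ofReal_pow (by linarith)]
  _ ≤ _ := le_rfl

/-- the probability that all leaves have only short contacts tends to `0`. -/
lemma tendsto_allbad {α : ℝ} (hα : 0 < α) (M : ℕ) (hM6 : 6 ≤ M) (hMα : 6 * α ≤ M) :
    Tendsto (fun k : ℕ =>
        ENNReal.ofReal ((1 - (3 * ((2 ^ (3 * (k / M) + 1) : ℕ) : ℝ) ^ α)⁻¹) ^ (2 ^ k)))
      atTop (nhds 0) := by
  have h0 : (0:ℝ≥0∞) = ENNReal.ofReal 0 := by simp
  rw [h0]
  apply ENNReal.tendsto_ofReal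
  -- the real sequence
  set q : ℕ → ℝ := fun k => (3 * ((2 ^ (3 * (k / M) + 1) : ℕ) : ℝ) ^ α)⁻¹ with hqdef
  -- lower bound for q k * 2^k
  have hqN : ∀ k : ℕ, Real.exp (((k : ℝ) / 2 - α) * Real.log 2) / 3 ≤ ((2 ^ k : ℕ) : ℝ) * q k := by
    intro k
    set m := k / M with hm
    have hBpos : (0:ℝ) < ((2 ^ (3 * m + 1) : ℕ) : ℝ) := by positivity
    have hexp1 : ((2 ^ (3 * m + 1) : ℕ) : ℝ) ^ α = (2:ℝ) ^ (((3 * m + 1 : ℕ) : ℝ) * α) := by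
      have : ((2 ^ (3 * m + 1) : ℕ) : ℝ) = (2:ℝ) ^ (((3 * m + 1 : ℕ) : ℝ)) := by
        rw [Real.rpow_natCast]
        push_cast
        ring
      rw [this, ← Real.rpow_mul (by norm_num)]
    have hMm : (M : ℝ) * (m : ℝ) ≤ k := by
      have := Nat.div_mul_le_self k M
      have h2 : (((k / M) * M : ℕ) : ℝ) ≤ (k : ℝ) := by exact_mod_cast this
      push_cast at h2
      linarith
    have hexp2 : ((3 * m + 1 : ℕ) : ℝ) * α ≤ (k : ℝ) / 2 + α := by
      push_cast
      have h1 : 3 * α * (m : ℝ) ≤ ((M : ℝ) / 2) * m := by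
        apply mul_le_mul_of_nonneg_right _ (Nat.cast_nonneg m)
        linarith
      have h2 : ((M : ℝ) / 2) * m ≤ (k : ℝ) / 2 := by linarith
      nlinarith
    have hmono : ((2 ^ (3 * m + 1) : ℕ) : ℝ) ^ α ≤ (2:ℝ) ^ ((k : ℝ) / 2 + α) := by
      rw [hexp1]
      exact Real.rpow_le_rpow_of_exponent_le (by norm_num) hexp2
    have hq_lb : ((3:ℝ) * (2:ℝ) ^ ((k : ℝ) / 2 + α))⁻¹ ≤ q k := by
      rw [hqdef]
      apply inv_anti₀
      · positivity
      · have := hmono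
        nlinarith [Real.rpow_pos_of_pos (show (0:ℝ) < 2 by norm_num) ((k : ℝ) / 2 + α)]
    have h2k : ((2 ^ k : ℕ) : ℝ) = (2:ℝ) ^ ((k : ℝ)) := by
      rw [Real.rpow_natCast]; push_cast; ring
    have hfinal : (2:ℝ) ^ ((k:ℝ)) * ((3:ℝ) * (2:ℝ) ^ ((k : ℝ) / 2 + α))⁻¹
        = (2:ℝ) ^ ((k : ℝ) / 2 - α) / 3 := by
      have hsub : (2:ℝ) ^ ((k : ℝ) / 2 - α) = (2:ℝ) ^ ((k:ℝ)) / (2:ℝ) ^ ((k : ℝ) / 2 + α) := by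
        rw [← Real.rpow_sub (by norm_num : (0:ℝ) < 2)]
        congr 1
        ring
      have hp : (0:ℝ) < (2:ℝ) ^ ((k : ℝ) / 2 + α) := Real.rpow_pos_of_pos (by norm_num) _
      rw [mul_inv, hsub]
      field_simp
    have hrpow_exp : (2:ℝ) ^ ((k : ℝ) / 2 - α) = Real.exp (((k : ℝ) / 2 - α) * Real.log 2) := by
      rw [Real.rpow_def_of_pos (by norm_num), mul_comm]
    calc Real.exp (((k : ℝ) / 2 - α) * Real.log 2) / 3
        = (2:ℝ) ^ ((k:ℝ)) * ((3:ℝ) * (2:ℝ) ^ ((k : ℝ) / 2 + α))⁻¹ := by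
          rw [hfinal, hrpow_exp]
    _ ≤ ((2 ^ k : ℕ) : ℝ) * q k := by
          rw [h2k]
          apply mul_le_mul_of_nonneg_left hq_lb (by positivity)
  -- q k * 2^k → ∞
  have hqN_top : Tendsto (fun k : ℕ => ((2 ^ k : ℕ) : ℝ) * q k) atTop atTop := by
    apply tendsto_atTop_mono hqN
    apply Tendsto.atTop_div_const (by norm_num : (0:ℝ) < 3)
    apply Real.tendsto_exp_atTop.comp
    apply Tendsto.atTop_mul_const (Real.log_pos (by norm_num))
    apply tendsto_atTop_add_const_right
    exact (tendsto_natCast_atTop_atTop (R := ℝ)).atTop_div_const (by norm_num)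
  -- squeeze
  have hub : ∀ k : ℕ, (1 - q k) ^ (2 ^ k) ≤ Real.exp (-(((2 ^ k : ℕ) : ℝ) * q k)) := by
    intro k
    obtain ⟨hq0, hq3⟩ := q_le_one hα (α := α) (k / M)
    have h1 : 1 - q k ≤ Real.exp (-(q k)) := by
      have := Real.add_one_le_exp (-(q k))
      linarith
    have h2 : (1 - q k) ^ (2 ^ k) ≤ Real.exp (-(q k)) ^ (2 ^ k) := by
      apply pow_le_pow_left₀ (by rw [hqdef] at *; linarith) h1
    refine le_trans h2 ?_
    rw [← Real.exp_nat_mul]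
    apply le_of_eq
    congr 1
    push_cast
    ring
  have hlb : ∀ k : ℕ, 0 ≤ (1 - q k) ^ (2 ^ k) := by
    intro k
    obtain ⟨hq0, hq3⟩ := q_le_one hα (α := α) (k / M)
    have : 0 ≤ 1 - q k := by rw [hqdef]; dsimp only; linarith
    positivity
  have hexp0 : Tendsto (fun k : ℕ => Real.exp (-(((2 ^ k : ℕ) : ℝ) * q k))) atTop (nhds 0) :=
    Real.tendsto_exp_neg_atTop_nhds_zero.comp hqN_top
  exact tendsto_of_tendsto_of_tendsto_of_le_of_le tendsto_const_nhds hexp0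
    (fun k => hlb k) (fun k => hub k)

end RRTaux

set_option maxHeartbeats 1000000 in
open MeasureTheory Filter RRTaux in
/-- Fix `α > 0` and `g(u,v) = d_R(u,v)^{-α}`. There are constants
`c₁, c₂ > 0` (depending only on `α`) such that with probability `1 - o(1)` as
`n = 2^(k+1) - 1 → ∞`, the random ringed tree satisfies
`c₁ log n ≤ δ(RRT(k+1, g)) ≤ c₂ log n`. -/
theorem rrt_power_law_decay_not_hyperbolic (α : ℝ) (hα : 0 < α) :
    ∃ c₁ : ℝ, 0 < c₁ ∧ ∃ c₂ : ℝ, 0 < c₂ ∧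
      Filter.Tendsto
        (fun k : ℕ =>
          leafChoiceMeasure k
            (fun u v => ((cycDist (2 ^ k) (u : ℕ) (v : ℕ) : ℕ) : ℝ) ^ (-α))
            {τ | c₁ * Real.log (((2 ^ (k + 1) - 1 : ℕ) : ℝ)) ≤ hyperbolicity (rrtGraph k τ) ∧
              hyperbolicity (rrtGraph k τ) ≤ c₂ * Real.log (((2 ^ (k + 1) - 1 : ℕ) : ℝ))})
        Filter.atTop (nhds 1) := by
  classical
  set M : ℕ := 6 * (⌈α⌉₊ + 1) with hM
  have hM6 : 6 ≤ M := by
    have : 1 ≤ ⌈α⌉₊ + 1 := by omega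
    calc 6 = 6 * 1 := by norm_num
    _ ≤ 6 * (⌈α⌉₊ + 1) := Nat.mul_le_mul_left 6 this
  have hMα : 6 * α ≤ (M : ℝ) := by
    have h1 : α ≤ (⌈α⌉₊ : ℝ) := Nat.le_ceil α
    have h2 : (M : ℝ) = 6 * ((⌈α⌉₊ : ℝ) + 1) := by rw [hM]; push_cast; ring
    linarith
  have hMpos : 0 < M := by omega
  refine ⟨1 / (16 * (M : ℝ)), by positivity, 3, by norm_num, ?_⟩
  apply tendsto_of_tendsto_of_tendsto_of_le_of_le'
    (g := fun k : ℕ => 1 - ENNReal.ofReal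
      ((1 - (3 * ((2 ^ (3 * (k / M) + 1) : ℕ) : ℝ) ^ α)⁻¹) ^ (2 ^ k)))
    (h := fun _ : ℕ => (1 : ℝ≥0∞))
  · -- the lower envelope tends to 1
    have h0 := tendsto_allbad hα M hM6 hMα
    have h1 : Tendsto (fun _ : ℕ => (1 : ℝ≥0∞)) atTop (nhds 1) := tendsto_const_nhds
    have h2 := ENNReal.Tendsto.sub h1 h0 (Or.inl ENNReal.one_ne_top)
    simpa using h2
  · exact tendsto_const_nhds
  · -- eventual lower bound on the measure of the event
    filter_upwards [eventually_ge_atTop (5 * M)] with k hk5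
    have hk1 : 1 ≤ k := by omega
    set m := k / M with hm
    have hm5 : 5 ≤ m := (Nat.le_div_iff_mul_le hMpos).mpr (by omega)
    have hm1 : 1 ≤ m := by omega
    have hmk : 3 * m + 2 ≤ k := by
      have h6 : m ≤ k / 6 := by rw [hm]; exact Nat.div_le_div_left hM6 (by norm_num)
      omega
    have hmeas : leafChoiceMeasure k
        (fun u v : Fin (2 ^ k) => ((cycDist (2 ^ k) (u : ℕ) (v : ℕ) : ℕ) : ℝ) ^ (-α))
        = Measure.pi (muv k α) := rfl
    rw [hmeas]
    haveI hPM : ∀ v : Fin (2 ^ k), IsProbabilityMeasure (muv k α v) :=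
      fun v => muv_prob k hk1 v
    set Bad : Set (Fin (2 ^ k) → Fin (2 ^ k)) := Set.univ.pi fun v => ↑(badf k m v) with hBad
    -- the complement of Bad is contained in the event
    have hsub : Badᶜ ⊆ {τ : Fin (2 ^ k) → Fin (2 ^ k) |
        1 / (16 * (M : ℝ)) * Real.log (((2 ^ (k + 1) - 1 : ℕ) : ℝ))
          ≤ hyperbolicity (rrtGraph k τ) ∧
        hyperbolicity (rrtGraph k τ)
          ≤ 3 * Real.log (((2 ^ (k + 1) - 1 : ℕ) : ℝ))} := by
      intro τ hτ
      rw [Set.mem_compl_iff, hBad, Set.mem_pi] at hτ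
      push_neg at hτ
      obtain ⟨v₀, -, hv₀⟩ := hτ
      have hL : 2 ^ (3 * m) ≤ cycDist (2 ^ k) ((v₀ : ℕ)) ((τ v₀ : ℕ)) := by
        rw [cyc_comm]
        by_contra hc
        refine hv₀ ?_
        rw [badf, Finset.mem_coe, Finset.mem_filter]
        exact ⟨Finset.mem_univ _, hc⟩
      have hhyp_lb := hyp_lower (τ := τ) m hm5 hmk v₀ hL
      have hhyp_ub := hyp_upper (τ := τ) (k := k)
      -- logarithm estimates
      have hcast1 : ((2 ^ k : ℕ) : ℝ) = (2 : ℝ) ^ k := by push_cast; ring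
      have hcast2 : ((2 ^ (k + 1) : ℕ) : ℝ) = (2 : ℝ) ^ (k + 1) := by push_cast; ring
      have hn1 : (2 : ℝ) ^ k ≤ ((2 ^ (k + 1) - 1 : ℕ) : ℝ) := by
        rw [← hcast1]
        have h2 : (2 ^ k : ℕ) ≤ 2 ^ (k + 1) - 1 := by
          have h3 : (2 : ℕ) ^ (k + 1) = 2 * 2 ^ k := by rw [pow_succ]; ring
          have h4 : 1 ≤ (2:ℕ) ^ k := Nat.one_le_two_pow
          omega
        exact_mod_cast h2
      have hn2 : ((2 ^ (k + 1) - 1 : ℕ) : ℝ) ≤ (2 : ℝ) ^ (k + 1) := by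
        rw [← hcast2]
        exact_mod_cast Nat.sub_le _ _
      have hlog1 : (k : ℝ) * Real.log 2 ≤ Real.log (((2 ^ (k + 1) - 1 : ℕ) : ℝ)) := by
        calc (k : ℝ) * Real.log 2 = Real.log ((2 : ℝ) ^ k) := by
              rw [Real.log_pow]
        _ ≤ _ := Real.log_le_log (by positivity) hn1
      have hlog2 : Real.log (((2 ^ (k + 1) - 1 : ℕ) : ℝ)) ≤ ((k : ℝ) + 1) * Real.log 2 := by
        calc Real.log (((2 ^ (k + 1) - 1 : ℕ) : ℝ))
            ≤ Real.log ((2 : ℝ) ^ (k + 1)) := by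
              have hpos : (0:ℝ) < ((2 ^ (k + 1) - 1 : ℕ) : ℝ) :=
                lt_of_lt_of_le (by positivity : (0:ℝ) < (2:ℝ) ^ k) hn1
              exact Real.log_le_log hpos hn2
        _ = ((k + 1 : ℕ) : ℝ) * Real.log 2 := by rw [Real.log_pow]
        _ = ((k : ℝ) + 1) * Real.log 2 := by push_cast; ring
      have hlogtwo_lt : Real.log 2 < 1 := by
        have := Real.log_two_lt_d9
        linarith
      have hlogtwo_gt : (0.6931471803 : ℝ) < Real.log 2 := Real.log_two_gt_d9
      have hkcast : (5 : ℝ) * (M : ℝ) ≤ (k : ℝ) := by exact_mod_cast hk5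
      have hMcast : (6 : ℝ) ≤ (M : ℝ) := by exact_mod_cast hM6
      have hmcast : (k : ℝ) / (M : ℝ) - 1 ≤ (m : ℝ) := by
        have hdm := Nat.div_add_mod k M
        have hrlt : k % M < M := Nat.mod_lt _ hMpos
        have h1 : (k : ℝ) = (M : ℝ) * (m : ℝ) + ((k % M : ℕ) : ℝ) := by
          rw [hm]
          exact_mod_cast hdm.symm
        have h2 : ((k % M : ℕ) : ℝ) < (M : ℝ) := by exact_mod_cast hrlt
        have hMpos' : (0 : ℝ) < (M : ℝ) := by linarith
        rw [div_sub' (ne_of_gt hMpos'), div_le_iff₀ hMpos']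
        nlinarith
      constructor
      · -- lower bound
        have hstep1 : 1 / (16 * (M : ℝ)) * Real.log (((2 ^ (k + 1) - 1 : ℕ) : ℝ))
            ≤ 1 / (16 * (M : ℝ)) * ((k : ℝ) + 1) := by
          apply mul_le_mul_of_nonneg_left _ (by positivity)
          calc Real.log (((2 ^ (k + 1) - 1 : ℕ) : ℝ)) ≤ ((k : ℝ) + 1) * Real.log 2 := hlog2
          _ ≤ ((k : ℝ) + 1) * 1 := by
              have hk0 : (0:ℝ) ≤ (k : ℝ) + 1 := by positivity
              nlinarith
          _ = (k : ℝ) + 1 := by ring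
        have hstep2 : 1 / (16 * (M : ℝ)) * ((k : ℝ) + 1) ≤ (m : ℝ) - 1 / 2 := by
          have hMpos' : (0 : ℝ) < (M : ℝ) := by linarith
          rw [div_mul_eq_mul_div, one_mul, div_le_iff₀ (by positivity)]
          have h1 : (k : ℝ) / (M : ℝ) - 1 ≤ (m : ℝ) := hmcast
          have h2 : (k : ℝ) ≥ 5 * (M : ℝ) := hkcast
          have h3 : (m : ℝ) ≥ (k : ℝ) / (M : ℝ) - 1 := h1
          have h4 : (k : ℝ) / (M : ℝ) * (M : ℝ) = (k : ℝ) := by field_simp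
          nlinarith
        exact le_trans (le_trans hstep1 hstep2) hhyp_lb
      · -- upper bound
        have h1 : hyperbolicity (rrtGraph k τ) ≤ 2 * (k : ℝ) := hhyp_ub
        have hk1' : (1 : ℝ) ≤ (k : ℝ) := by exact_mod_cast hk1
        calc hyperbolicity (rrtGraph k τ) ≤ 2 * (k : ℝ) := h1
        _ ≤ 3 * ((k : ℝ) * Real.log 2) := by nlinarith
        _ ≤ 3 * Real.log (((2 ^ (k + 1) - 1 : ℕ) : ℝ)) := by linarith
    -- measure computation
    have hballbad := allbad_le hα k m hm1 hmk
    have h2 : (1 : ℝ≥0∞) ≤ Measure.pi (muv k α) Bad + Measure.pi (muv k α) Badᶜ := by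
      have h3 := measure_union_le (μ := Measure.pi (muv k α)) Bad Badᶜ
      rw [Set.union_compl_self, measure_univ] at h3
      exact h3
    have h4 : Measure.pi (muv k α) Badᶜ
        ≤ Measure.pi (muv k α) {τ : Fin (2 ^ k) → Fin (2 ^ k) |
          1 / (16 * (M : ℝ)) * Real.log (((2 ^ (k + 1) - 1 : ℕ) : ℝ))
            ≤ hyperbolicity (rrtGraph k τ) ∧
          hyperbolicity (rrtGraph k τ)
            ≤ 3 * Real.log (((2 ^ (k + 1) - 1 : ℕ) : ℝ))} := measure_mono hsub
    calc 1 - ENNReal.ofReal ((1 - (3 * ((2 ^ (3 * m + 1) : ℕ) : ℝ) ^ α)⁻¹) ^ (2 ^ k))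
        ≤ 1 - Measure.pi (muv k α) Bad := tsub_le_tsub_left hballbad 1
    _ ≤ Measure.pi (muv k α) Badᶜ := by
        rw [tsub_le_iff_right]
        rw [add_comm]
        exact h2
    _ ≤ _ := h4
  · -- eventual upper bound : probability measures are at most one
    filter_upwards [eventually_ge_atTop 1] with k hk1
    have hmeas : leafChoiceMeasure k
        (fun u v : Fin (2 ^ k) => ((cycDist (2 ^ k) (u : ℕ) (v : ℕ) : ℕ) : ℝ) ^ (-α))
        = Measure.pi (muv k α) := rfl
    rw [hmeas]
    haveI hPM : ∀ v : Fin (2 ^ k), IsProbabilityMeasure (muv k α v) :=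
      fun v => muv_prob k hk1 v
    exact prob_le_one
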